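/- Let 0 < α < 1, c > 0, φ̄ ≥ 0, and 0 < γ_m ≤ γ_M. Define ω(z) = -c·|z|^α·sign(z) and u(z) = (1/γ_m)·(ω(z) + φ̄·sign(ω(z))), where sign(x) = x/|x| for x ≠ 0 and sign(0) = 0. Let z : [0,∞) → ℝ be differentiable and φ, γ : [0,∞) → ℝ satisfy |φ(t)| ≤ φ̄ and γ_m ≤ γ(t) ≤ γ_M for all t, with z'(t) = γ(t)·u(z(t)) + φ(t) for all t ≥ 0. Then there exists t* ≤ |z(0)|^{1-α}/(c(1-α)) such that z(t*) = 0; i.e. the controller forces the perturbed single integrator to reach zero in finite time, at a rate at least as fast as the unperturbed system ż = -c⌊z⌉^α. -/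

import Mathlib

lemma stmt9_aux (c α φbar γm γM : ℝ) (hc : 0 < c) (hα0 : 0 < α) (hα1 : α < 1)
    (hφ : 0 ≤ φbar) (hγm : 0 < γm)
    (z φ γ : ℝ → ℝ)
    (hφb : ∀ t, 0 ≤ t → |φ t| ≤ φbar)
    (hγb : ∀ t, 0 ≤ t → γm ≤ γ t ∧ γ t ≤ γM)
    (hode : ∀ t, 0 ≤ t → HasDerivAt z
      (γ t * ((1 / γm) * (-c * |z t| ^ α * Real.sign (z t) +
          φbar * Real.sign (-c * |z t| ^ α * Real.sign (z t)))) + φ t) t)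
    (hz0 : 0 ≤ z 0) :
    ∃ tstar : ℝ, 0 ≤ tstar ∧ tstar ≤ |z 0| ^ (1 - α) / (c * (1 - α)) ∧ z tstar = 0 := by
  have h1α : 0 < 1 - α := by linarith
  have hcα : 0 < c * (1 - α) := mul_pos hc h1α
  set T : ℝ := |z 0| ^ (1 - α) / (c * (1 - α)) with hTdef
  have hT0 : 0 ≤ T := div_nonneg (Real.rpow_nonneg (abs_nonneg _) _) hcα.le
  by_contra hcon
  push_neg at hcon
  -- z 0 > 0
  have hz0ne : z 0 ≠ 0 := hcon 0 le_rfl hT0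
  have hz0pos : 0 < z 0 := lt_of_le_of_ne hz0 (Ne.symm hz0ne)
  have hcont : ContinuousOn z (Set.Icc 0 T) := fun t ht =>
    ((hode t ht.1).continuousAt).continuousWithinAt
  -- z stays positive on [0,T]
  have hpos : ∀ t ∈ Set.Icc (0:ℝ) T, 0 < z t := by
    intro t ht
    by_contra hle
    push_neg at hle
    have hne : z t ≠ 0 := hcon t ht.1 ht.2
    have hlt : z t < 0 := lt_of_le_of_ne hle hne
    have hiv := intermediate_value_Icc' ht.1
      (hcont.mono (Set.Icc_subset_Icc le_rfl ht.2))
    have h0mem : (0:ℝ) ∈ Set.Icc (z t) (z 0) := ⟨hlt.le, hz0pos.le⟩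
    obtain ⟨s, hs, hzs⟩ := hiv h0mem
    exact hcon s hs.1 (hs.2.trans ht.2) hzs
  -- derivative of z with bound
  have hderiv : ∀ t ∈ Set.Icc (0:ℝ) T, ∃ d : ℝ,
      HasDerivAt z d t ∧ d ≤ -(c * (z t) ^ α) := by
    intro t ht
    have hzt := hpos t ht
    have habs : |z t| = z t := abs_of_pos hzt
    have hzα : 0 < (z t) ^ α := Real.rpow_pos_of_pos hzt α
    have hsz : Real.sign (z t) = 1 := Real.sign_of_pos hzt
    have hωneg : -c * |z t| ^ α * Real.sign (z t) < 0 := by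
      rw [habs, hsz]; nlinarith
    have hsω : Real.sign (-c * |z t| ^ α * Real.sign (z t)) = -1 :=
      Real.sign_of_neg hωneg
    have hD := hode t ht.1
    rw [hsω, habs, hsz] at hD
    refine ⟨_, hD, ?_⟩
    have hγt := hγb t ht.1
    have hφt' := abs_le.mp (hφb t ht.1)
    set X : ℝ := -c * (z t) ^ α * 1 + φbar * (-1) with hXdef
    have hX : X ≤ 0 := by rw [hXdef]; nlinarith
    have h2 : γ t * X ≤ γm * X := mul_le_mul_of_nonpos_right hγt.1 hX
    have key : γ t * ((1 / γm) * X) ≤ X := by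
      rw [show γ t * ((1 / γm) * X) = (γ t * X) / γm by ring, div_le_iff₀ hγm]
      nlinarith
    have : X + φ t ≤ -(c * (z t) ^ α) := by
      rw [hXdef]; linarith [hφt'.2]
    linarith
  -- the Lyapunov-type function
  set g : ℝ → ℝ := fun t => z t ^ (1 - α) + (c * (1 - α)) * t with hgdef
  have hg : ∀ t ∈ Set.Icc (0:ℝ) T, ∃ d : ℝ, HasDerivAt g d t ∧ d ≤ 0 := by
    intro t ht
    obtain ⟨d, hD, hdle⟩ := hderiv t ht
    have hzt := hpos t ht
    have hzne : z t ≠ 0 := ne_of_gt hzt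
    have h1 : HasDerivAt (fun s => z s ^ (1 - α))
        (d * (1 - α) * z t ^ (1 - α - 1)) t := hD.rpow_const (Or.inl hzne)
    have h2 : HasDerivAt (fun s => (c * (1 - α)) * s) (c * (1 - α)) t := by
      simpa using (hasDerivAt_id t).const_mul (c * (1 - α))
    refine ⟨_, h1.add h2, ?_⟩
    have hzexp : z t ^ α * z t ^ (1 - α - 1) = 1 := by
      rw [← Real.rpow_add hzt]
      norm_num
    have hzexp_pos : 0 < z t ^ (1 - α - 1) := Real.rpow_pos_of_pos hzt _
    have hmul : d * (1 - α) * z t ^ (1 - α - 1) ≤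
        -(c * (z t) ^ α) * (1 - α) * z t ^ (1 - α - 1) := by
      have h1α : 0 < 1 - α := by linarith
      apply mul_le_mul_of_nonneg_right _ hzexp_pos.le
      exact mul_le_mul_of_nonneg_right hdle h1α.le
    have heq : -(c * (z t) ^ α) * (1 - α) * z t ^ (1 - α - 1) = -(c * (1 - α)) := by
      have : -(c * (z t) ^ α) * (1 - α) * z t ^ (1 - α - 1)
          = -(c * (1 - α)) * (z t ^ α * z t ^ (1 - α - 1)) := by ring
      rw [this, hzexp, mul_one]
    linarith [hmul, heq.le]
  -- g is antitone on [0,T]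
  have hganti : AntitoneOn g (Set.Icc 0 T) := by
    apply antitoneOn_of_deriv_nonpos (convex_Icc 0 T)
    · intro t ht
      obtain ⟨d, hD, _⟩ := hg t ht
      exact hD.continuousAt.continuousWithinAt
    · intro t ht
      rw [interior_Icc] at ht
      obtain ⟨d, hD, _⟩ := hg t (Set.mem_Icc.mpr ⟨ht.1.le, ht.2.le⟩)
      exact hD.differentiableAt.differentiableWithinAt
    · intro t ht
      rw [interior_Icc] at ht
      obtain ⟨d, hD, hd0⟩ := hg t (Set.mem_Icc.mpr ⟨ht.1.le, ht.2.le⟩)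
      rw [hD.deriv]; exact hd0
  have hmemT : T ∈ Set.Icc (0:ℝ) T := ⟨hT0, le_rfl⟩
  have hmem0 : (0:ℝ) ∈ Set.Icc (0:ℝ) T := ⟨le_rfl, hT0⟩
  have hgle := hganti hmem0 hmemT hT0
  have hg0 : g 0 = c * (1 - α) * T := by
    rw [hgdef]
    simp only [mul_zero, add_zero]
    rw [hTdef, mul_div_cancel₀ _ hcα.ne', abs_of_pos hz0pos]
  have hgT : g T = z T ^ (1 - α) + c * (1 - α) * T := rfl
  have hzT : 0 < z T ^ (1 - α) :=
    Real.rpow_pos_of_pos (hpos T hmemT) _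
  rw [hgT, hg0] at hgle
  linarith

/-- The controller `u(z) = (ω(z) + φ̄ sign(ω(z)))/γ_m` with `ω(z) = -c⌊z⌉^α`, `0 < α < 1`,
forces the perturbed single integrator `ż = γ(t) u(z) + φ(t)` (with `|φ| ≤ φ̄`,
`γ_m ≤ γ ≤ γ_M`) to reach zero in finite time, no later than the settling time
`|z(0)|^{1-α}/(c(1-α))` of the unperturbed system `ż = -c⌊z⌉^α`. -/
theorem stmt9 (c α φbar γm γM : ℝ) (hc : 0 < c) (hα0 : 0 < α) (hα1 : α < 1)
    (hφ : 0 ≤ φbar) (hγm : 0 < γm) (hγ : γm ≤ γM)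
    (z φ γ : ℝ → ℝ)
    (hφb : ∀ t, 0 ≤ t → |φ t| ≤ φbar)
    (hγb : ∀ t, 0 ≤ t → γm ≤ γ t ∧ γ t ≤ γM)
    (hode : ∀ t, 0 ≤ t → HasDerivAt z
      (γ t * ((1 / γm) * (-c * |z t| ^ α * Real.sign (z t) +
          φbar * Real.sign (-c * |z t| ^ α * Real.sign (z t)))) + φ t) t) :
    ∃ tstar : ℝ, 0 ≤ tstar ∧ tstar ≤ |z 0| ^ (1 - α) / (c * (1 - α)) ∧ z tstar = 0 := by
  rcases le_total 0 (z 0) with hz0 | hz0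
  · exact stmt9_aux c α φbar γm γM hc hα0 hα1 hφ hγm z φ γ hφb hγb hode hz0
  · -- apply the aux lemma to -z, -φ
    have hode' : ∀ t, 0 ≤ t → HasDerivAt (fun s => -z s)
        (γ t * ((1 / γm) * (-c * |(-z t)| ^ α * Real.sign (-z t) +
            φbar * Real.sign (-c * |(-z t)| ^ α * Real.sign (-z t)))) + (-φ t)) t := by
      intro t ht
      have hD := (hode t ht).neg
      refine hD.congr_deriv ?_
      rw [abs_neg, Real.sign_neg]
      rw [show -c * |z t| ^ α * -Real.sign (z t) = -(-c * |z t| ^ α * Real.sign (z t)) by ring,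
        Real.sign_neg]
      ring
    have hφb' : ∀ t, 0 ≤ t → |(-φ t)| ≤ φbar := by
      intro t ht; rw [abs_neg]; exact hφb t ht
    obtain ⟨tstar, h1, h2, h3⟩ := stmt9_aux c α φbar γm γM hc hα0 hα1 hφ hγm
      (fun s => -z s) (fun s => -φ s) γ hφb' hγb hode' (by simpa using hz0)
    refine ⟨tstar, h1, ?_, by linarith [h3]⟩
    simpa using h2
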